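/- Let p be a prime, let n ≥ 2, and let a₁, …, aₙ be integers with 0 < a₁ < a₂ < ⋯ < aₙ < p and gcd(a₁, …, aₙ) = 1. Let A = {ā₁, …, āₙ} ⊆ ℤ/pℤ be the set of their residues modulo p. Then p/aₙ ≤ h^c(A) ≤ w(A) < p/aₙ + aₙ + a_{n−1} (as real numbers). Moreover, if a_{n−1}(aₙ − 1) < p, then h^c(A) < p/aₙ + aₙ. -/

import Mathlib

open scoped Pointwise

/-- `iterSum A k` is the `k`-fold sumset `A + ⋯ + A` (with `iterSum A 0 = {0}`). -/
def iterSum {G : Type*} [AddCommMonoid G] (A : Set G) : ℕ → Set G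
  | 0 => {0}
  | k + 1 => iterSum A k + A

/-- The coheight of `A`: the least positive `k` with `0 ∈ A + ⋯ + A` (`k` copies). -/
noncomputable def coheight {G : Type*} [AddCommMonoid G] (A : Set G) : ℕ :=
  sInf {k : ℕ | 0 < k ∧ (0 : G) ∈ iterSum A k}

/-- The width of `A`: the least positive `k` such that every element of `G` is a sum of
at most `k` elements of `A`. -/
noncomputable def width {G : Type*} [AddCommMonoid G] (A : Set G) : ℕ :=
  sInf {k : ℕ | 0 < k ∧ ∀ g : G, ∃ j : ℕ, 0 < j ∧ j ≤ k ∧ g ∈ iterSum A j}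

lemma iterSum_succ {G : Type*} [AddCommMonoid G] (A : Set G) (k : ℕ) :
    iterSum A (k + 1) = iterSum A k + A := rfl

lemma list_sum_mem_iterSum {G : Type*} [AddCommMonoid G] {A : Set G} :
    ∀ l : List G, (∀ x ∈ l, x ∈ A) → l.sum ∈ iterSum A l.length := by
  intro l
  induction l with
  | nil => intro _; simp [iterSum]
  | cons x t ih =>
    intro h
    have h1 : t.sum ∈ iterSum A t.length := ih fun y hy => h y (List.mem_cons_of_mem _ hy)
    have h2 : x ∈ A := h x (List.mem_cons_self)
    have h3 := Set.add_mem_add h1 h2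
    simpa [List.length_cons, iterSum_succ, List.sum_cons, add_comm] using h3

lemma exists_list_of_mem_iterSum {G : Type*} [AddCommMonoid G] {A : Set G} :
    ∀ (k : ℕ) (x : G), x ∈ iterSum A k →
      ∃ l : List G, l.length = k ∧ (∀ y ∈ l, y ∈ A) ∧ l.sum = x := by
  intro k
  induction k with
  | zero =>
    intro x hx
    refine ⟨[], rfl, by simp, ?_⟩
    simp only [iterSum, Set.mem_singleton_iff] at hx
    simp [hx]
  | succ k ih =>
    intro x hx
    rw [iterSum_succ, Set.mem_add] at hx
    obtain ⟨u, hu, v, hv, rfl⟩ := hx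
    obtain ⟨l, hl, hmem, hsum⟩ := ih u hu
    refine ⟨v :: l, by simp [hl], ?_, by simp [hsum, add_comm]⟩
    intro y hy
    rcases List.mem_cons.mp hy with rfl | hy
    · exact hv
    · exact hmem y hy

lemma exists_short_list {M : Type*} [AddCommMonoid M] [Fintype M] (S : Set M) :
    ∀ l : List M, (∀ x ∈ l, x ∈ S) →
      ∃ l' : List M, l'.length ≤ Fintype.card M - 1 ∧ (∀ x ∈ l', x ∈ S) ∧ l'.sum = l.sum := by
  suffices H : ∀ (N : ℕ) (l : List M), l.length ≤ N → (∀ x ∈ l, x ∈ S) →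
      ∃ l' : List M, l'.length ≤ Fintype.card M - 1 ∧ (∀ x ∈ l', x ∈ S) ∧ l'.sum = l.sum by
    exact fun l hl => H l.length l le_rfl hl
  intro N
  induction N with
  | zero =>
    intro l hlen hl
    exact ⟨l, by omega, hl, rfl⟩
  | succ N ih =>
    intro l hlen hl
    by_cases hle : l.length ≤ Fintype.card M - 1
    · exact ⟨l, hle, hl, rfl⟩
    · have hcardpos : 0 < Fintype.card M := Fintype.card_pos
      have hL : Fintype.card M ≤ l.length := by omega
      have hcard : Fintype.card M < Fintype.card (Fin (l.length + 1)) := by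
        simp only [Fintype.card_fin]; omega
      obtain ⟨i, j, hne, heq⟩ :=
        Fintype.exists_ne_map_eq_of_card_lt
          (fun k : Fin (l.length + 1) => (l.take (k : ℕ)).sum) hcard
      have main : ∀ i j : Fin (l.length + 1), (i : ℕ) < (j : ℕ) →
          (l.take (i : ℕ)).sum = (l.take (j : ℕ)).sum →
          ∃ l' : List M, l'.length ≤ Fintype.card M - 1 ∧ (∀ x ∈ l', x ∈ S) ∧ l'.sum = l.sum := by
        intro i j hij hsum
        have hj : (j : ℕ) ≤ l.length := Nat.lt_succ_iff.mp j.isLt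
        have hmem : ∀ x ∈ l.take (i : ℕ) ++ l.drop (j : ℕ), x ∈ S := by
          intro x hx
          rcases List.mem_append.mp hx with hx | hx
          · exact hl x (List.take_subset _ _ hx)
          · exact hl x (List.drop_subset _ _ hx)
        have hlen2 : (l.take (i : ℕ) ++ l.drop (j : ℕ)).length ≤ N := by
          rw [List.length_append, List.length_take, List.length_drop]
          omega
        obtain ⟨l', h1, h2, h3⟩ := ih _ hlen2 hmem
        refine ⟨l', h1, h2, ?_⟩
        rw [h3, List.sum_append]
        conv_rhs => rw [← List.take_append_drop (j : ℕ) l]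
        rw [List.sum_append, hsum]
      rcases lt_or_gt_of_ne hne with h | h
      · exact main i j h heq
      · exact main j i h heq.symm

lemma exists_list_of_mem_addSubgroup_closure {M : Type*} [AddCommGroup M] [Fintype M] (S : Set M)
    (g : M) (hg : g ∈ AddSubgroup.closure S) :
    ∃ l : List M, (∀ x ∈ l, x ∈ S) ∧ l.sum = g := by
  have hneg : ∀ x ∈ AddSubmonoid.closure S, -x ∈ AddSubmonoid.closure S := by
    intro x hx
    have hord : 0 < addOrderOf x := addOrderOf_pos x
    have h0 : addOrderOf x • x = 0 := addOrderOf_nsmul_eq_zero x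
    have h1 : (addOrderOf x - 1) • x + x = 0 := by
      rw [← succ_nsmul, Nat.sub_add_cancel hord]; exact h0
    have h2 : -x = (addOrderOf x - 1) • x := neg_eq_of_add_eq_zero_left h1
    rw [h2]
    exact AddSubmonoid.nsmul_mem _ hx _
  let H : AddSubgroup M :=
    { AddSubmonoid.closure S with neg_mem' := fun hx => hneg _ hx }
  have hle : AddSubgroup.closure S ≤ H :=
    (AddSubgroup.closure_le H).mpr AddSubmonoid.subset_closure
  exact AddSubmonoid.exists_list_of_mem_closure (hle hg)

lemma natCast_gcd_mem_closure {q : ℕ} {ι : Type*} [DecidableEq ι] (a : ι → ℕ)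
    (S : Set (ZMod q)) (s : Finset ι) (hs : ∀ i ∈ s, ((a i : ℕ) : ZMod q) ∈ S) :
    ((s.gcd a : ℕ) : ZMod q) ∈ AddSubgroup.closure S := by
  induction s using Finset.induction_on with
  | empty => simpa [Finset.gcd_empty] using (AddSubgroup.closure S).zero_mem
  | @insert i s hi ih =>
    rw [Finset.gcd_insert]
    have hx : ((a i : ℕ) : ZMod q) ∈ AddSubgroup.closure S :=
      AddSubgroup.subset_closure (hs i (Finset.mem_insert_self _ _))
    have hy : ((s.gcd a : ℕ) : ZMod q) ∈ AddSubgroup.closure S :=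
      ih fun j hj => hs j (Finset.mem_insert_of_mem hj)
    have hb := Nat.gcd_eq_gcd_ab (a i) (s.gcd a)
    have hcast : ((GCDMonoid.gcd (a i) (s.gcd a) : ℕ) : ZMod q) =
        (Nat.gcdA (a i) (s.gcd a)) • ((a i : ℕ) : ZMod q) +
        (Nat.gcdB (a i) (s.gcd a)) • ((s.gcd a : ℕ) : ZMod q) := by
      have hgg : GCDMonoid.gcd (a i) (s.gcd a) = Nat.gcd (a i) (s.gcd a) := rfl
      rw [hgg, zsmul_eq_mul, zsmul_eq_mul]
      calc ((Nat.gcd (a i) (s.gcd a) : ℕ) : ZMod q)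
          = (((Nat.gcd (a i) (s.gcd a) : ℤ)) : ZMod q) := by push_cast; ring
        _ = ((((a i : ℕ) : ℤ) * Nat.gcdA (a i) (s.gcd a)
              + ((s.gcd a : ℕ) : ℤ) * Nat.gcdB (a i) (s.gcd a) : ℤ) : ZMod q) := by rw [← hb]
        _ = _ := by push_cast; ring
    rw [hcast]
    exact AddSubgroup.add_mem _ (AddSubgroup.zsmul_mem _ hx _) (AddSubgroup.zsmul_mem _ hy _)

lemma cover_lemma (n q : ℕ) (hn : 2 ≤ n) (hq0 : 0 < q) (a : Fin n → ℕ)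
    (hq : q = a ⟨n - 1, by omega⟩) (hgcd : Finset.univ.gcd a = 1) (ρ : ZMod q) :
    ∃ l : List ℕ, l.length ≤ q - 1 ∧
      (∀ x ∈ l, ∃ i : Fin n, (i : ℕ) < n - 1 ∧ x = a i) ∧ ((l.sum : ℕ) : ZMod q) = ρ := by
  haveI : NeZero q := ⟨by omega⟩
  set S : Set (ZMod q) := {x : ZMod q | ∃ i : Fin n, (i : ℕ) < n - 1 ∧ x = ((a i : ℕ) : ZMod q)}
    with hS
  have hlast : (⟨n - 1, by omega⟩ : Fin n) ∈ (Finset.univ : Finset (Fin n)) := Finset.mem_univ _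
  obtain ⟨d, hd⟩ : ∃ d : ℕ, ((Finset.univ : Finset (Fin n)).erase ⟨n - 1, by omega⟩).gcd a = d :=
    ⟨_, rfl⟩
  have hqd : Nat.gcd q d = 1 := by
    have h1 : (Finset.univ : Finset (Fin n))
        = insert (⟨n - 1, by omega⟩ : Fin n)
            ((Finset.univ : Finset (Fin n)).erase ⟨n - 1, by omega⟩) :=
      (Finset.insert_erase hlast).symm
    rw [h1, Finset.gcd_insert, hd] at hgcd
    rw [hq, ← gcd_eq_nat_gcd]
    exact hgcd
  have hdS : ((d : ℕ) : ZMod q) ∈ AddSubgroup.closure S := by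
    rw [← hd]
    apply natCast_gcd_mem_closure
    intro i hi
    have hine : i ≠ ⟨n - 1, by omega⟩ := (Finset.mem_erase.mp hi).1
    have hlt : (i : ℕ) < n - 1 := by
      have h1 := i.isLt
      have h2 : (i : ℕ) ≠ n - 1 := fun hh => hine (Fin.ext hh)
      omega
    exact ⟨i, hlt, rfl⟩
  have h1S : (1 : ZMod q) ∈ AddSubgroup.closure S := by
    have hb := Nat.gcd_eq_gcd_ab q d
    rw [hqd] at hb
    have heq : (1 : ZMod q) = (Nat.gcdB q d) • ((d : ℕ) : ZMod q) := by
      have h2 := congrArg (fun z : ℤ => ((z : ℤ) : ZMod q)) hb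
      simp only [Int.cast_add, Int.cast_mul, Int.cast_natCast, Int.cast_one] at h2
      rw [ZMod.natCast_self] at h2
      rw [zsmul_eq_mul]
      push_cast at h2 ⊢
      linear_combination h2
    rw [heq]
    exact AddSubgroup.zsmul_mem _ hdS _
  have hρ : ρ ∈ AddSubgroup.closure S := by
    have heq : ρ = ZMod.val ρ • (1 : ZMod q) := by
      rw [nsmul_eq_mul, mul_one, ZMod.natCast_zmod_val]
    rw [heq]
    exact AddSubgroup.nsmul_mem _ h1S _
  obtain ⟨l0, hl0S, hl0sum⟩ := exists_list_of_mem_addSubgroup_closure S ρ hρ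
  obtain ⟨l1, hl1len, hl1S, hl1sum⟩ := exists_short_list S l0 hl0S
  have hconv : ∀ l : List (ZMod q), (∀ x ∈ l, x ∈ S) → ∃ m : List ℕ,
      m.length = l.length ∧ (∀ x ∈ m, ∃ i : Fin n, (i : ℕ) < n - 1 ∧ x = a i) ∧
      ((m.sum : ℕ) : ZMod q) = l.sum := by
    intro l
    induction l with
    | nil => intro _; exact ⟨[], rfl, by simp, by simp⟩
    | cons x t ihc =>
      intro hmem
      obtain ⟨m, hm1, hm2, hm3⟩ := ihc fun y hy => hmem y (List.mem_cons_of_mem _ hy)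
      obtain ⟨i, hi, hx⟩ := hmem x (List.mem_cons_self)
      refine ⟨a i :: m, by simp [hm1], ?_, ?_⟩
      · intro y hy
        rcases List.mem_cons.mp hy with rfl | hy
        · exact ⟨i, hi, rfl⟩
        · exact hm2 y hy
      · rw [List.sum_cons, List.sum_cons, Nat.cast_add, hm3, hx]
  obtain ⟨m, hm1, hm2, hm3⟩ := hconv l1 hl1S
  refine ⟨m, ?_, hm2, by rw [hm3, hl1sum, hl0sum]⟩
  rw [hm1]
  have hcard : Fintype.card (ZMod q) = q := ZMod.card q
  omega

lemma key_lemma (p n q r : ℕ) (hn : 2 ≤ n) (hq2 : 2 ≤ q) (hr1 : 1 ≤ r) (a : Fin n → ℕ)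
    (hq : q = a ⟨n - 1, by omega⟩) (hgcd : Finset.univ.gcd a = 1)
    (hq1all : ∀ i : Fin n, 1 ≤ a i) (har : ∀ i : Fin n, (i : ℕ) < n - 1 → a i ≤ r)
    (A : Set (ZMod p)) (hA : A = Set.range fun i => ((a i : ZMod p)))
    (N : ℕ) (hN : (q - 1) * r ≤ N) :
    ∃ t : ℕ, 1 ≤ t ∧ q * t ≤ (q - 1) * (q - 1) + N ∧ ((N : ℕ) : ZMod p) ∈ iterSum A t := by
  have hq0 : 0 < q := by omega
  obtain ⟨l, hlen, hmem, hsum⟩ := cover_lemma n q hn hq0 a hq hgcd ((N : ℕ) : ZMod q)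
  obtain ⟨c, hc⟩ : ∃ c, l.length = c := ⟨_, rfl⟩
  obtain ⟨B, hB⟩ : ∃ B, l.sum = B := ⟨_, rfl⟩
  rw [hc] at hlen
  have hBub : B ≤ c * r := by
    have h := List.sum_le_card_nsmul l r (fun x hx => by
      obtain ⟨i, hi, rfl⟩ := hmem x hx; exact har i hi)
    rw [hB, hc, smul_eq_mul] at h
    exact h
  have hBlb : c ≤ B := by
    have h := List.card_nsmul_le_sum l 1 (fun x hx => by
      obtain ⟨i, _, rfl⟩ := hmem x hx; exact hq1all i)
    rw [hB, hc, smul_eq_mul, mul_one] at h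
    exact h
  have hcr : c * r ≤ (q - 1) * r := Nat.mul_le_mul_right r hlen
  have hBN : B ≤ N := le_trans hBub (le_trans hcr hN)
  have hmod : q ∣ N - B := by
    have hBmodN : B ≡ N [MOD q] := by
      rw [hB] at hsum
      exact (ZMod.natCast_eq_natCast_iff _ _ _).mp hsum
    exact (Nat.modEq_iff_dvd' hBN).mp hBmodN
  obtain ⟨u, hu⟩ : ∃ u, (N - B) / q = u := ⟨_, rfl⟩
  have huq : u * q = N - B := by rw [← hu]; exact Nat.div_mul_cancel hmod
  refine ⟨c + u, ?_, ?_, ?_⟩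
  · -- 1 ≤ c + u
    rcases Nat.eq_zero_or_pos c with hc0 | hc0
    · have hl0 : l = [] := List.length_eq_zero_iff.mp (hc ▸ hc0)
      have hB0 : B = 0 := by rw [← hB, hl0]; rfl
      have hqN : q ∣ N := by have := hmod; rw [hB0, Nat.sub_zero] at this; exact this
      have hN1 : 1 ≤ N := by
        have := Nat.mul_le_mul (show 1 ≤ q - 1 by omega) hr1
        omega
      have hNq : q ≤ N := Nat.le_of_dvd (by omega) hqN
      have hu1 : 1 ≤ u := by
        rw [← hu, hB0, Nat.sub_zero]
        exact (Nat.one_le_div_iff hq0).mpr hNq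
      omega
    · omega
  · -- q * (c + u) ≤ (q-1)*(q-1) + N
    have h2 : q * u = N - B := by rw [mul_comm]; exact huq
    have h4 : (q - 1) * c ≤ (q - 1) * (q - 1) := Nat.mul_le_mul_left _ hlen
    have h5 : q * c = (q - 1) * c + c := by
      have h6 : q - 1 + 1 = q := by omega
      calc q * c = (q - 1 + 1) * c := by rw [h6]
        _ = (q - 1) * c + c := by ring
    have h7 : q * (c + u) = q * c + (N - B) := by rw [Nat.mul_add, h2]
    omega
  · -- membership
    have hsumfull : (l ++ List.replicate u q).sum = N := by
      rw [List.sum_append, List.sum_replicate, smul_eq_mul, hB]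
      omega
    have hlenfull : (l ++ List.replicate u q).length = c + u := by
      rw [List.length_append, List.length_replicate, hc]
    have hmemfull : ∀ x ∈ l ++ List.replicate u q, ∃ i : Fin n, x = a i := by
      intro x hx
      rcases List.mem_append.mp hx with hx | hx
      · obtain ⟨i, _, rfl⟩ := hmem x hx
        exact ⟨i, rfl⟩
      · rw [List.eq_of_mem_replicate hx]
        exact ⟨⟨n - 1, by omega⟩, hq⟩
    have hmap := list_sum_mem_iterSum (A := A)
      ((l ++ List.replicate u q).map (fun x : ℕ => (x : ZMod p))) (by
        intro y hy
        obtain ⟨x, hx, rfl⟩ := List.mem_map.mp hy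
        obtain ⟨i, rfl⟩ := hmemfull x hx
        rw [hA]
        exact ⟨i, rfl⟩)
    rw [List.length_map, hlenfull] at hmap
    have hcast : ((l ++ List.replicate u q).map (fun x : ℕ => (x : ZMod p))).sum
        = ((N : ℕ) : ZMod p) := by
      rw [← Nat.cast_list_sum, hsumfull]
    rwa [hcast] at hmap

lemma lift_lemma (p n q : ℕ) (hp0 : 0 < p) (a : Fin n → ℕ)
    (hq1all : ∀ i : Fin n, 1 ≤ a i) (haq : ∀ i : Fin n, a i ≤ q)
    (A : Set (ZMod p)) (hA : A = Set.range fun i => ((a i : ZMod p)))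
    (k : ℕ) (hk : 0 < k) (h : (0 : ZMod p) ∈ iterSum A k) : p ≤ k * q := by
  haveI : NeZero p := ⟨by omega⟩
  obtain ⟨l, hlen, hmemA, hsum⟩ := exists_list_of_mem_iterSum k (0 : ZMod p) h
  have hconv : ∀ l : List (ZMod p), (∀ x ∈ l, x ∈ A) → ∃ m : List ℕ,
      m.length = l.length ∧ (∀ x ∈ m, ∃ i : Fin n, x = a i) ∧
      ((m.sum : ℕ) : ZMod p) = l.sum := by
    intro l
    induction l with
    | nil => intro _; exact ⟨[], rfl, by simp, by simp⟩
    | cons x t ihc =>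
      intro hmem
      obtain ⟨m, hm1, hm2, hm3⟩ := ihc fun y hy => hmem y (List.mem_cons_of_mem _ hy)
      have hx := hmem x (List.mem_cons_self)
      rw [hA] at hx
      obtain ⟨i, hx⟩ := hx
      simp only [] at hx
      refine ⟨a i :: m, by simp [hm1], ?_, ?_⟩
      · intro y hy
        rcases List.mem_cons.mp hy with rfl | hy
        · exact ⟨i, rfl⟩
        · exact hm2 y hy
      · rw [List.sum_cons, List.sum_cons, Nat.cast_add, hm3, hx]
  obtain ⟨m, hm1, hm2, hm3⟩ := hconv l hmemA
  have hMub : m.sum ≤ k * q := by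
    have h := List.sum_le_card_nsmul m q (fun x hx => by
      obtain ⟨i, rfl⟩ := hm2 x hx; exact haq i)
    rw [hm1, hlen, smul_eq_mul] at h
    exact h
  have hMlb : k ≤ m.sum := by
    have h := List.card_nsmul_le_sum m 1 (fun x hx => by
      obtain ⟨i, rfl⟩ := hm2 x hx; exact hq1all i)
    rw [hm1, hlen, smul_eq_mul, mul_one] at h
    exact h
  have hcast : ((m.sum : ℕ) : ZMod p) = 0 := by rw [hm3, hsum]
  have hpM : p ∣ m.sum := (ZMod.natCast_eq_zero_iff _ _).mp hcast
  have hple : p ≤ m.sum := Nat.le_of_dvd (by omega) hpM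
  omega

theorem coheight_width_bounds_aux (p n : ℕ) (hp : p.Prime) (hn : 2 ≤ n) (a : Fin n → ℕ)
    (q r : ℕ) (hq : q = a ⟨n - 1, by omega⟩) (hr : r = a ⟨n - 2, by omega⟩)
    (ha0 : 0 < a ⟨0, by omega⟩) (hmono : StrictMono a) (hap : q < p)
    (hgcd : Finset.univ.gcd a = 1) (A : Set (ZMod p))
    (hA : A = Set.range fun i => ((a i : ZMod p))) :
    (((p : ℝ) / (q : ℝ) ≤ (coheight A : ℝ)) ∧ coheight A ≤ width A ∧
      (width A : ℝ) < (p : ℝ) / (q : ℝ) + (q : ℝ) + (r : ℝ)) ∧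
    (r * (q - 1) < p → (coheight A : ℝ) < (p : ℝ) / (q : ℝ) + (q : ℝ)) := by
  have hp0 : 0 < p := hp.pos
  haveI : NeZero p := ⟨by omega⟩
  have hq1all : ∀ i : Fin n, 1 ≤ a i := by
    intro i
    exact le_trans ha0 (hmono.monotone (by simp [Fin.le_def]))
  have haq : ∀ i : Fin n, a i ≤ q := by
    intro i
    rw [hq]
    exact hmono.monotone (by simp [Fin.le_def]; omega)
  have har : ∀ i : Fin n, (i : ℕ) < n - 1 → a i ≤ r := by
    intro i hi
    rw [hr]
    exact hmono.monotone (by simp [Fin.le_def]; omega)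
  have hrq : r < q := by
    rw [hq, hr]
    exact hmono (by simp [Fin.lt_def]; omega)
  have hr1 : 1 ≤ r := hr ▸ hq1all _
  have hq2 : 2 ≤ q := by omega
  have hq0 : 0 < q := by omega
  have key := key_lemma p n q r hn hq2 hr1 a hq hgcd hq1all har A hA
  -- for each g, a representation of bounded size
  have hwidth_all : ∀ g : ZMod p, ∃ t : ℕ, 1 ≤ t ∧
      q * t ≤ (q - 1) * (q - 1) + ((q - 1) * r + (p - 1)) ∧ g ∈ iterSum A t := by
    intro g
    by_cases hcase : (q - 1) * r ≤ ZMod.val g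
    · obtain ⟨t, h1, h2, h3⟩ := key (ZMod.val g) hcase
      refine ⟨t, h1, ?_, ?_⟩
      · have hvlt : ZMod.val g < p := ZMod.val_lt g
        omega
      · rwa [ZMod.natCast_zmod_val g] at h3
    · push_neg at hcase
      obtain ⟨X, hX⟩ : ∃ X, (q - 1) * r - ZMod.val g = X := ⟨_, rfl⟩
      obtain ⟨s, hs⟩ : ∃ s, (X + p - 1) / p = s := ⟨_, rfl⟩
      obtain ⟨N, hNdef⟩ : ∃ N, ZMod.val g + s * p = N := ⟨_, rfl⟩
      have hub : s * p ≤ X + p - 1 := by rw [← hs]; exact Nat.div_mul_le_self _ _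
      have hlb : X ≤ s * p := by
        have h1 : (X + p - 1) % p < p := Nat.mod_lt _ hp0
        have h2 : (X + p - 1) / p * p + (X + p - 1) % p = X + p - 1 := Nat.div_add_mod' _ _
        rw [← hs]
        omega
      have hNm : (q - 1) * r ≤ N := by omega
      have hNub : N ≤ (q - 1) * r + (p - 1) := by omega
      obtain ⟨t, h1, h2, h3⟩ := key N hNm
      refine ⟨t, h1, by omega, ?_⟩
      have hcast : ((N : ℕ) : ZMod p) = g := by
        rw [← hNdef]
        push_cast [ZMod.natCast_self]
        simp [ZMod.natCast_zmod_val]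
      rwa [hcast] at h3
  obtain ⟨K, hK⟩ : ∃ K, ((q - 1) * (q - 1) + ((q - 1) * r + (p - 1))) / q = K := ⟨_, rfl⟩
  have hwK : ∀ g : ZMod p, ∃ t : ℕ, 1 ≤ t ∧ t ≤ K ∧ g ∈ iterSum A t := by
    intro g
    obtain ⟨t, h1, h2, h3⟩ := hwidth_all g
    refine ⟨t, h1, ?_, h3⟩
    rw [← hK]
    exact (Nat.le_div_iff_mul_le hq0).mpr (by rw [mul_comm]; exact h2)
  have hKpos : 0 < K := by
    obtain ⟨t, h1, h2, _⟩ := hwK 0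
    omega
  have hKmem : K ∈ {k : ℕ | 0 < k ∧ ∀ g : ZMod p, ∃ j : ℕ, 0 < j ∧ j ≤ k ∧ g ∈ iterSum A j} :=
    ⟨hKpos, fun g => by obtain ⟨t, h1, h2, h3⟩ := hwK g; exact ⟨t, h1, h2, h3⟩⟩
  have hwdef : width A
      = sInf {k : ℕ | 0 < k ∧ ∀ g : ZMod p, ∃ j : ℕ, 0 < j ∧ j ≤ k ∧ g ∈ iterSum A j} := rfl
  have hchdef : coheight A = sInf {k : ℕ | 0 < k ∧ (0 : ZMod p) ∈ iterSum A k} := rfl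
  have hwle : width A ≤ K := hwdef ▸ Nat.sInf_le hKmem
  have hwmem : 0 < width A ∧ ∀ g : ZMod p, ∃ j : ℕ, 0 < j ∧ j ≤ width A ∧ g ∈ iterSum A j :=
    hwdef ▸ Nat.sInf_mem (⟨K, hKmem⟩ :
      Set.Nonempty {k : ℕ | 0 < k ∧ ∀ g : ZMod p, ∃ j : ℕ, 0 < j ∧ j ≤ k ∧ g ∈ iterSum A j})
  obtain ⟨j, hj0, hjw, hj⟩ := hwmem.2 0
  have hSne : Set.Nonempty {k : ℕ | 0 < k ∧ (0 : ZMod p) ∈ iterSum A k} := ⟨j, hj0, hj⟩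
  have hchmem : 0 < coheight A ∧ (0 : ZMod p) ∈ iterSum A (coheight A) :=
    hchdef ▸ Nat.sInf_mem hSne
  have hchw : coheight A ≤ width A :=
    le_trans (hchdef ▸ Nat.sInf_le (⟨hj0, hj⟩ :
      j ∈ {k : ℕ | 0 < k ∧ (0 : ZMod p) ∈ iterSum A k})) hjw
  have hlow : p ≤ coheight A * q :=
    lift_lemma p n q hp0 a hq1all haq A hA (coheight A) hchmem.1 hchmem.2
  have hq0' : (0 : ℝ) < (q : ℝ) := by exact_mod_cast hq0
  constructor
  · refine ⟨?_, ?_, ?_⟩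
    · rw [div_le_iff₀ hq0']
      exact_mod_cast hlow
    · exact hchw
    · -- width bound
      have h1 : width A * q ≤ (q - 1) * (q - 1) + ((q - 1) * r + (p - 1)) :=
        le_trans (Nat.mul_le_mul_right q hwle) (by rw [← hK]; exact Nat.div_mul_le_self _ _)
      have h2 : ((width A : ℝ)) * q ≤ ((q : ℝ) - 1) * ((q : ℝ) - 1) + ((q : ℝ) - 1) * r + (p - 1) := by
        have := h1
        have hcast : ((((q - 1) * (q - 1) + ((q - 1) * r + (p - 1))) : ℕ) : ℝ)
            = ((q : ℝ) - 1) * ((q : ℝ) - 1) + ((q : ℝ) - 1) * r + ((p : ℝ) - 1) := by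
          push_cast [Nat.cast_sub (show 1 ≤ q by omega), Nat.cast_sub (show 1 ≤ p by omega)]
          ring
        calc ((width A : ℝ)) * q = ((width A * q : ℕ) : ℝ) := by push_cast; ring
          _ ≤ (((q - 1) * (q - 1) + ((q - 1) * r + (p - 1)) : ℕ) : ℝ) := by exact_mod_cast h1
          _ = _ := by rw [hcast]
      rw [show (p : ℝ) / q + q + r = ((p : ℝ) + q * q + r * q) / q by field_simp,
        lt_div_iff₀ hq0']
      have hq2' : (2 : ℝ) ≤ (q : ℝ) := by exact_mod_cast hq2
      have hr1' : (1 : ℝ) ≤ (r : ℝ) := by exact_mod_cast hr1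
      nlinarith [h2]
  · intro hcond
    have hm : (q - 1) * r ≤ p := by
      rw [mul_comm]
      omega
    obtain ⟨t, h1, h2, h3⟩ := key p hm
    rw [ZMod.natCast_self] at h3
    have hcht : coheight A ≤ t := hchdef ▸ Nat.sInf_le ⟨h1, h3⟩
    have h4 : q * coheight A ≤ (q - 1) * (q - 1) + p :=
      le_trans (Nat.mul_le_mul_left q hcht) h2
    rw [show (p : ℝ) / q + q = ((p : ℝ) + q * q) / q by field_simp, lt_div_iff₀ hq0']
    have h5 : ((coheight A : ℝ)) * q ≤ ((q : ℝ) - 1) * ((q : ℝ) - 1) + p := by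
      calc ((coheight A : ℝ)) * q = ((q * coheight A : ℕ) : ℝ) := by push_cast; ring
        _ ≤ (((q - 1) * (q - 1) + p : ℕ) : ℝ) := by exact_mod_cast h4
        _ = _ := by push_cast [Nat.cast_sub (show 1 ≤ q by omega)]; ring
    have hq2' : (2 : ℝ) ≤ (q : ℝ) := by exact_mod_cast hq2
    nlinarith [h5]

theorem coheight_width_bounds (p n : ℕ) (hp : p.Prime) (hn : 2 ≤ n) (a : Fin n → ℕ)
    (ha0 : 0 < a ⟨0, by omega⟩) (hmono : StrictMono a)
    (hap : a ⟨n - 1, by omega⟩ < p)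
    (hgcd : Finset.univ.gcd a = 1)
    (A : Set (ZMod p)) (hA : A = Set.range fun i => ((a i : ZMod p))) :
    ((p : ℝ) / (a ⟨n - 1, by omega⟩ : ℝ) ≤ (coheight A : ℝ) ∧
      coheight A ≤ width A ∧
      (width A : ℝ) < (p : ℝ) / (a ⟨n - 1, by omega⟩ : ℝ) +
        (a ⟨n - 1, by omega⟩ : ℝ) + (a ⟨n - 2, by omega⟩ : ℝ)) ∧
    (a ⟨n - 2, by omega⟩ * (a ⟨n - 1, by omega⟩ - 1) < p →
      (coheight A : ℝ) < (p : ℝ) / (a ⟨n - 1, by omega⟩ : ℝ) + (a ⟨n - 1, by omega⟩ : ℝ)) := by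
  exact coheight_width_bounds_aux p n hp hn a _ _ rfl rfl ha0 hmono hap hgcd A hA
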